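/- For any distinct spectral points f_0, f_1 ∈ Δ(𝒢), there exists a vertex-transitive finite simple graph G such that f_0(G) ≠ f_1(G). -/

import Mathlib

open Filter

/-- A bundled finite simple graph. -/
structure FinGraph where
  V : Type
  [fintypeV : Fintype V]
  G : SimpleGraph V

attribute [instance] FinGraph.fintypeV

namespace FinGraph

/-- Helper constructor. -/
def mk' (V : Type) [Fintype V] (G : SimpleGraph V) : FinGraph := ⟨V, G⟩

/-- Strong product of simple graphs. -/
def strongProdAdj {α β : Type} (G : SimpleGraph α) (H : SimpleGraph β) :
    SimpleGraph (α × β) where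
  Adj x y := x ≠ y ∧ (G.Adj x.1 y.1 ∨ x.1 = y.1) ∧ (H.Adj x.2 y.2 ∨ x.2 = y.2)
  symm := by
    constructor
    rintro x y ⟨hne, h1, h2⟩
    refine ⟨hne.symm, ?_, ?_⟩
    · rcases h1 with h | h
      · exact Or.inl h.symm
      · exact Or.inr h.symm
    · rcases h2 with h | h
      · exact Or.inl h.symm
      · exact Or.inr h.symm
  loopless := by constructor; rintro x ⟨h, -⟩; exact h rfl

/-- The `n`-th strong power of a simple graph, on vertex set `Fin n → α`. -/
def strongPowAdj {α : Type} (G : SimpleGraph α) (n : ℕ) : SimpleGraph (Fin n → α) where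
  Adj x y := x ≠ y ∧ ∀ i, G.Adj (x i) (y i) ∨ x i = y i
  symm := by
    constructor
    rintro x y ⟨hne, h⟩
    refine ⟨hne.symm, fun i => ?_⟩
    rcases h i with h' | h'
    · exact Or.inl h'.symm
    · exact Or.inr h'.symm
  loopless := by constructor; rintro x ⟨h, -⟩; exact h rfl

/-- Disjoint union of simple graphs. -/
def disjUnionAdj {α β : Type} (G : SimpleGraph α) (H : SimpleGraph β) :
    SimpleGraph (α ⊕ β) where
  Adj x y := (∃ a b, x = Sum.inl a ∧ y = Sum.inl b ∧ G.Adj a b) ∨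
             (∃ a b, x = Sum.inr a ∧ y = Sum.inr b ∧ H.Adj a b)
  symm := by
    constructor
    rintro x y (⟨a, b, rfl, rfl, h⟩ | ⟨a, b, rfl, rfl, h⟩)
    · exact Or.inl ⟨b, a, rfl, rfl, h.symm⟩
    · exact Or.inr ⟨b, a, rfl, rfl, h.symm⟩
  loopless := by
    constructor
    rintro x (⟨a, b, rfl, h, hadj⟩ | ⟨a, b, rfl, h, hadj⟩)
    · cases Sum.inl.inj h; exact hadj.ne rfl
    · cases Sum.inr.inj h; exact hadj.ne rfl

/-- Bundled strong product `G ⊠ H`. -/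
def sprod (A B : FinGraph) : FinGraph := mk' (A.V × B.V) (strongProdAdj A.G B.G)

/-- Bundled `n`-th strong power `G^{⊠ n}`. -/
def spow (A : FinGraph) (n : ℕ) : FinGraph := mk' (Fin n → A.V) (strongPowAdj A.G n)

/-- Bundled disjoint union `G ⊔ H`. -/
def dUnion (A B : FinGraph) : FinGraph := mk' (A.V ⊕ B.V) (disjUnionAdj A.G B.G)

/-- Bundled complement graph. -/
def compl (A : FinGraph) : FinGraph := mk' A.V A.Gᶜ

/-- Graph join `G + H`: the complement of the disjoint union of the complements. -/
def join (A B : FinGraph) : FinGraph := (A.compl.dUnion B.compl).compl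

/-- The edgeless graph `E_n` on `n` vertices. -/
def edgeless (n : ℕ) : FinGraph := mk' (Fin n) ⊥

/-- `cohomLE A B`: there is a cohomomorphism from `A` to `B`, i.e. a graph homomorphism
from the complement of `A` to the complement of `B`. -/
def cohomLE (A B : FinGraph) : Prop := Nonempty (A.Gᶜ →g B.Gᶜ)

/-- Asymptotic cohomomorphism preorder: `A ≲ B` iff there is `f : ℕ → ℕ` with
`f n / n → 0` and `A^{⊠ n} ≤ B^{⊠ (n + f n)}` for all `n`. -/
def asympCohomLE (A B : FinGraph) : Prop :=
  ∃ f : ℕ → ℕ, Tendsto (fun n => (f n : ℝ) / (n : ℝ)) atTop (nhds 0) ∧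
    ∀ n, cohomLE (A.spow n) (B.spow (n + f n))

/-- The asymptotic spectrum of graphs `Δ(𝒢)`: nonnegative real graph parameters that are
normalised on edgeless graphs, multiplicative under the strong product, additive under
disjoint union, and monotone under cohomomorphism. -/
def Delta : Set (FinGraph → ℝ) :=
  { f | (∀ A, 0 ≤ f A) ∧ (∀ n : ℕ, f (edgeless n) = n) ∧
        (∀ A B, f (A.sprod B) = f A * f B) ∧
        (∀ A B, f (A.dUnion B) = f A + f B) ∧
        (∀ A B, cohomLE A B → f A ≤ f B) }

/-- Vertex-transitivity of a bundled graph. -/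
def IsVertexTransitive (A : FinGraph) : Prop :=
  ∀ u v : A.V, ∃ e : A.G ≃g A.G, e u = v

/-- Cyclic distance between `i, j ∈ {0, …, p-1}` modulo `p`. -/
def cycDist (p i j : ℕ) : ℕ := min ((p + i - j) % p) ((p + j - i) % p)

/-- The fraction graph `E_{p/q}`: vertex set `ℤ_p`, distinct vertices adjacent iff
their cyclic distance modulo `p` is strictly less than `q`. -/
def fracGraph (p q : ℕ) : FinGraph :=
  mk' (Fin p)
    { Adj := fun i j => i ≠ j ∧ cycDist p i j < q
      symm := by
        constructor
        rintro i j ⟨hne, hd⟩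
        exact ⟨hne.symm, by simpa [cycDist, min_comm] using hd⟩
      loopless := ⟨fun i h => h.1 rfl⟩ }

/-- The complement of the projective rank `ξ̄_f(G)`: the infimum of `d/r` over all
assignments of `r`-dimensional subspaces of `ℂ^d` to the vertices such that distinct
non-adjacent vertices receive orthogonal subspaces. -/
noncomputable def xibar (A : FinGraph) : ℝ :=
  sInf { x : ℝ | ∃ d r : ℕ, 0 < d ∧ 0 < r ∧ x = (d : ℝ) / (r : ℝ) ∧
    ∃ W : A.V → Submodule ℂ (EuclideanSpace ℂ (Fin d)),
      (∀ v, Module.finrank ℂ (W v) = r) ∧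
      ∀ v w : A.V, v ≠ w → ¬ A.G.Adj v w →
        ∀ x ∈ W v, ∀ y ∈ W w, (inner ℂ x y : ℂ) = 0 }

end FinGraph

open FinGraph


namespace FinGraph

/-! ### Auxiliary machinery -/

/-- An isomorphism of graphs induces an isomorphism of complements. -/
def isoCompl {A B : FinGraph} (e : A.G ≃g B.G) : A.Gᶜ ≃g B.Gᶜ where
  toEquiv := e.toEquiv
  map_rel_iff' := by
    intro a b
    simp only [SimpleGraph.compl_adj, ne_eq, EmbeddingLike.apply_eq_iff_eq]
    exact and_congr_right fun _ => not_congr e.map_rel_iff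

lemma cohomLE_of_iso {A B : FinGraph} (e : A.G ≃g B.G) : cohomLE A B :=
  ⟨(isoCompl e).toHom⟩

lemma eq_of_iso {f : FinGraph → ℝ} (hf : f ∈ Delta) {A B : FinGraph}
    (e : A.G ≃g B.G) : f A = f B :=
  le_antisymm (hf.2.2.2.2 A B (cohomLE_of_iso e))
    (hf.2.2.2.2 B A (cohomLE_of_iso e.symm))

/-- The zeroth strong power is a single vertex. -/
def spowZeroIso (A : FinGraph) : (A.spow 0).G ≃g (edgeless 1).G where
  toEquiv :=
    { toFun := fun _ => (0 : Fin 1)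
      invFun := fun _ => (fun i => i.elim0)
      left_inv := fun x => funext fun i => i.elim0
      right_inv := fun x => Subsingleton.elim (α := Fin 1) _ x }
  map_rel_iff' := by
    intro a b
    constructor
    · intro h; exact absurd h (by simp [edgeless, mk'])
    · rintro ⟨h, -⟩; exact absurd (funext fun i => i.elim0) h

/-- Peeling off one factor of a strong power. -/
def spowSuccIso (A : FinGraph) (k : ℕ) :
    (A.spow (k + 1)).G ≃g ((A.spow k).sprod A).G where
  toEquiv :=
    { toFun := fun x => (Fin.init x, x (Fin.last k))
      invFun := fun p => Fin.snoc p.1 p.2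
      left_inv := fun x => Fin.snoc_init_self x
      right_inv := fun p => Prod.ext (Fin.init_snoc (α := fun _ => A.V) _ _) (Fin.snoc_last (α := fun _ => A.V) _ _) }
  map_rel_iff' := by
    intro x y
    show (strongProdAdj _ _).Adj (Fin.init x, x (Fin.last k))
        (Fin.init y, y (Fin.last k)) ↔ (strongPowAdj A.G (k + 1)).Adj x y
    constructor
    · rintro ⟨hne, h1, h2⟩
      refine ⟨fun h => hne (by rw [h]), fun i => ?_⟩
      refine Fin.lastCases ?_ ?_ i
      · exact h2
      · intro j
        rcases h1 with h | h
        · exact h.2 j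
        · exact Or.inr (congrFun h j)
    · rintro ⟨hne, h⟩
      refine ⟨?_, ?_, h (Fin.last k)⟩
      · intro hp
        apply hne
        have h1 : Fin.init x = Fin.init y := congrArg Prod.fst hp
        have h2 : x (Fin.last k) = y (Fin.last k) := congrArg Prod.snd hp
        funext i
        exact Fin.lastCases h2 (fun j => congrFun h1 j) i
      · by_cases hxy : Fin.init x = Fin.init y
        · exact Or.inr hxy
        · exact Or.inl ⟨hxy, fun j => h j.castSucc⟩

lemma f_spow {f : FinGraph → ℝ} (hf : f ∈ Delta) (A : FinGraph) :
    ∀ k : ℕ, f (A.spow k) = f A ^ k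
  | 0 => by
      rw [eq_of_iso hf (spowZeroIso A), hf.2.1 1, pow_zero, Nat.cast_one]
  | (k + 1) => by
      rw [eq_of_iso hf (spowSuccIso A k), hf.2.2.1, f_spow hf A k, pow_succ]

/-- Induced subgraph on a predicate, as a bundled graph. -/
@[reducible] noncomputable def induceFG (A : FinGraph) (P : A.V → Prop) : FinGraph :=
  @FinGraph.mk {x : A.V // P x} (Fintype.ofFinite _)
    { Adj := fun x y => A.G.Adj x.1 y.1
      symm := ⟨fun _ _ h => A.G.adj_symm h⟩
      loopless := ⟨fun x h => A.G.irrefl h⟩ }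

lemma cohomLE_induce (A : FinGraph) (P : A.V → Prop) :
    cohomLE (induceFG A P) A := by
  refine ⟨⟨Subtype.val, ?_⟩⟩
  intro x y h
  rw [SimpleGraph.compl_adj] at h ⊢
  exact ⟨fun hxy => h.1 (Subtype.ext hxy), h.2⟩

/-- Iterated disjoint union. -/
def bigU : List FinGraph → FinGraph
  | [] => edgeless 0
  | (A :: l) => A.dUnion (bigU l)

lemma f_bigU {f : FinGraph → ℝ} (hf : f ∈ Delta) :
    ∀ l : List FinGraph, f (bigU l) = (l.map f).sum
  | [] => by simpa [bigU] using hf.2.1 0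
  | (A :: l) => by
      show f (A.dUnion (bigU l)) = _
      rw [hf.2.2.2.1, f_bigU hf l]
      simp

lemma compl_dUnion_adj_inl_inl {A B : FinGraph} {a b : A.V} :
    (A.dUnion B).Gᶜ.Adj (Sum.inl a) (Sum.inl b) ↔ A.Gᶜ.Adj a b := by
  show (disjUnionAdj A.G B.G)ᶜ.Adj (Sum.inl a) (Sum.inl b) ↔ _
  simp [dUnion, mk', disjUnionAdj, SimpleGraph.compl_adj]

lemma compl_dUnion_adj_inr_inr {A B : FinGraph} {a b : B.V} :
    (A.dUnion B).Gᶜ.Adj (Sum.inr a) (Sum.inr b) ↔ B.Gᶜ.Adj a b := by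
  show (disjUnionAdj A.G B.G)ᶜ.Adj (Sum.inr a) (Sum.inr b) ↔ _
  simp [dUnion, mk', disjUnionAdj, SimpleGraph.compl_adj]

lemma compl_dUnion_adj_inl_inr {A B : FinGraph} {a : A.V} {b : B.V} :
    (A.dUnion B).Gᶜ.Adj (Sum.inl a) (Sum.inr b) := by
  show (disjUnionAdj A.G B.G)ᶜ.Adj (Sum.inl a) (Sum.inr b)
  simp [dUnion, mk', disjUnionAdj, SimpleGraph.compl_adj]

lemma compl_dUnion_adj_inr_inl {A B : FinGraph} {a : B.V} {b : A.V} :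
    (A.dUnion B).Gᶜ.Adj (Sum.inr a) (Sum.inl b) := by
  show (disjUnionAdj A.G B.G)ᶜ.Adj (Sum.inr a) (Sum.inl b)
  simp [dUnion, mk', disjUnionAdj, SimpleGraph.compl_adj]

/-- Splitting a graph into induced pieces along a list of predicates covering it. -/
lemma cohom_split (A : FinGraph) :
    ∀ (l : List (A.V → Prop)) (P0 : A.V → Prop),
      (∀ x, P0 x → ∃ P ∈ l, P x) →
      Nonempty ((induceFG A P0).Gᶜ →g (bigU (l.map (induceFG A))).Gᶜ)
  | [], P0, hcov => by
      refine ⟨⟨fun x => absurd (hcov x.1 x.2) (by simp), ?_⟩⟩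
      intro x y _
      exact absurd (hcov x.1 x.2) (by simp)
  | (P :: l), P0, hcov => by
      classical
      obtain ⟨ψ⟩ := cohom_split A l (fun x => P0 x ∧ ¬ P x)
        (fun x hx => by
          obtain ⟨Q, hQ, hQx⟩ := hcov x hx.1
          rcases List.mem_cons.mp hQ with rfl | hQ'
          · exact absurd hQx hx.2
          · exact ⟨Q, hQ', hQx⟩)
      refine ⟨⟨fun x => if h : P x.1 then Sum.inl (⟨x.1, h⟩ : (induceFG A P).V)
              else Sum.inr (ψ ⟨x.1, x.2, h⟩), ?_⟩⟩
      intro x y hxy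
      rw [SimpleGraph.compl_adj] at hxy
      have hne : x.1 ≠ y.1 := fun h => hxy.1 (Subtype.ext h)
      have hnadj : ¬ A.G.Adj x.1 y.1 := hxy.2
      show (bigU (induceFG A P :: l.map (induceFG A))).Gᶜ.Adj _ _
      dsimp only
      by_cases hx : P x.1 <;> by_cases hy : P y.1
      · erw [dif_pos hx, dif_pos hy]
        exact compl_dUnion_adj_inl_inl.mpr
          (by rw [SimpleGraph.compl_adj]
              exact ⟨fun h => hne (Subtype.mk_eq_mk.mp h), hnadj⟩)
      · erw [dif_pos hx, dif_neg hy]; exact compl_dUnion_adj_inl_inr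
      · erw [dif_neg hx, dif_pos hy]; exact compl_dUnion_adj_inr_inl
      · erw [dif_neg hx, dif_neg hy]
        refine compl_dUnion_adj_inr_inr.mpr (ψ.map_rel ?_)
        rw [SimpleGraph.compl_adj]
        exact ⟨fun h => hne (Subtype.mk_eq_mk.mp h), hnadj⟩

/-- The inclusion of a graph into its induced subgraph on the full predicate. -/
lemma cohomLE_induce_true (A : FinGraph) :
    Nonempty (A.Gᶜ →g (induceFG A (fun _ => True)).Gᶜ) := by
  refine ⟨⟨fun x => ⟨x, trivial⟩, ?_⟩⟩
  intro x y h
  rw [SimpleGraph.compl_adj] at h ⊢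
  exact ⟨fun hxy => h.1 (congrArg Subtype.val hxy), h.2⟩

/-! ### Type classes of strong powers -/

/-- Number of occurrences of a value in a tuple. -/
noncomputable def cnt {V : Type} {k : ℕ} (x : Fin k → V) (v : V) : ℕ :=
  Nat.card {i : Fin k // x i = v}

lemma cnt_le {V : Type} {k : ℕ} (x : Fin k → V) (v : V) : cnt x v ≤ k := by
  have := Nat.card_le_card_of_injective (Subtype.val : {i : Fin k // x i = v} → Fin k)
    Subtype.val_injective
  simpa [cnt, Nat.card_eq_of_equiv_fin (Equiv.refl (Fin k))] using this

lemma cnt_comp {V : Type} {k : ℕ} (x : Fin k → V) (π : Equiv.Perm (Fin k)) (v : V) :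
    cnt (x ∘ π) v = cnt x v :=
  Nat.card_congr (π.subtypeEquiv fun _ => Iff.rfl)

lemma exists_perm {V : Type} [Fintype V] {k : ℕ} (x y : Fin k → V)
    (h : ∀ v, cnt x v = cnt y v) :
    ∃ π : Equiv.Perm (Fin k), ∀ i, x (π i) = y i := by
  have e : ∀ v, Nonempty ({i : Fin k // x i = v} ≃ {i : Fin k // y i = v}) :=
    fun v => Finite.card_eq.mp (h v)
  have e' : ∀ v, {i : Fin k // x i = v} ≃ {i : Fin k // y i = v} :=
    fun v => (e v).some
  refine ⟨(Equiv.sigmaFiberEquiv y).symm.trans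
    ((Equiv.sigmaCongrRight (fun v => (e' v).symm)).trans (Equiv.sigmaFiberEquiv x)), ?_⟩
  intro i
  exact ((e' (y i)).symm ⟨i, rfl⟩).2

/-- Type predicate: the tuple `x` has count vector `c`. -/
def Pc (G : FinGraph) (k : ℕ) (c : G.V → Fin (k + 1)) : (G.spow k).V → Prop :=
  fun x => ∀ v, cnt x v = (c v : ℕ)

lemma spow_adj_comp (G : FinGraph) {k : ℕ} (π : Equiv.Perm (Fin k))
    (z w : Fin k → G.V) :
    (G.spow k).G.Adj (z ∘ π) (w ∘ π) ↔ (G.spow k).G.Adj z w := by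
  show (strongPowAdj G.G k).Adj _ _ ↔ (strongPowAdj G.G k).Adj _ _
  constructor
  · rintro ⟨hne, h⟩
    refine ⟨?_, fun i => by simpa using h (π.symm i)⟩
    intro hzw
    apply hne
    funext i
    show z (π i) = w (π i)
    rw [hzw]
  · rintro ⟨hne, h⟩
    refine ⟨?_, fun i => h (π i)⟩
    intro hzw
    apply hne
    funext i
    have := congrFun hzw (π.symm i)
    simpa using this

/-- The type classes of a strong power are vertex-transitive. -/
lemma vt_class (G : FinGraph) (k : ℕ) (c : G.V → Fin (k + 1)) :
    IsVertexTransitive (induceFG (G.spow k) (Pc G k c)) := by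
  rintro ⟨x, hx⟩ ⟨y, hy⟩
  obtain ⟨π, hπ⟩ := exists_perm x y (fun v => (hx v).trans (hy v).symm)
  refine ⟨⟨⟨fun z => ⟨z.1 ∘ π, fun v => (cnt_comp z.1 π v).trans (z.2 v)⟩,
            fun z => ⟨z.1 ∘ π.symm, fun v => (cnt_comp z.1 π.symm v).trans (z.2 v)⟩,
            ?_, ?_⟩, ?_⟩, ?_⟩
  · intro z
    refine Subtype.ext (funext fun i => ?_)
    show z.1 (π (π.symm i)) = z.1 i
    rw [Equiv.apply_symm_apply]
  · intro z
    refine Subtype.ext (funext fun i => ?_)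
    show z.1 (π.symm (π i)) = z.1 i
    rw [Equiv.symm_apply_apply]
  · intro z w
    exact spow_adj_comp G π z.1 w.1
  · exact Subtype.ext (funext hπ)

/-- Key inequality: agreement on vertex-transitive graphs gives polynomial control. -/
lemma key_ineq (f0 f1 : FinGraph → ℝ) (h0 : f0 ∈ Delta) (h1 : f1 ∈ Delta)
    (hvt : ∀ A, IsVertexTransitive A → f0 A = f1 A) (G : FinGraph) (k : ℕ) :
    f0 G ^ k ≤ ((k + 1 : ℕ) : ℝ) ^ (Fintype.card G.V) * f1 G ^ k := by
  classical
  set A' := G.spow k with hA'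
  set l : List ((G.spow k).V → Prop) :=
    (Finset.univ : Finset (G.V → Fin (k + 1))).toList.map (Pc G k) with hl
  have hcov : ∀ x : (G.spow k).V, (fun _ => True) x → ∃ P ∈ l, P x := by
    intro x _
    refine ⟨Pc G k (fun v => ⟨cnt x v, Nat.lt_succ_of_le (cnt_le x v)⟩), ?_, ?_⟩
    · exact List.mem_map.mpr ⟨_, Finset.mem_toList.mpr (Finset.mem_univ _), rfl⟩
    · intro v; rfl
  obtain ⟨ψ⟩ := cohom_split (G.spow k) l (fun _ => True) hcov
  obtain ⟨ι⟩ := cohomLE_induce_true (G.spow k)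
  have hstep : cohomLE (G.spow k) (bigU (l.map (induceFG (G.spow k)))) := ⟨ψ.comp ι⟩
  have h0le : f0 (G.spow k) ≤ f0 (bigU (l.map (induceFG (G.spow k)))) :=
    h0.2.2.2.2 _ _ hstep
  rw [f_bigU h0] at h0le
  have hbound : ((l.map (induceFG (G.spow k))).map f0).sum ≤
      ((l.map (induceFG (G.spow k))).map f0).length • (f1 G ^ k) := by
    apply List.sum_le_card_nsmul
    intro r hr
    obtain ⟨B, hB, rfl⟩ := List.mem_map.mp hr
    obtain ⟨P, hP, rfl⟩ := List.mem_map.mp hB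
    obtain ⟨c, hc, rfl⟩ := List.mem_map.mp hP
    rw [hvt _ (vt_class G k c)]
    calc f1 (induceFG (G.spow k) (Pc G k c)) ≤ f1 (G.spow k) :=
          h1.2.2.2.2 _ _ (cohomLE_induce _ _)
      _ = f1 G ^ k := f_spow h1 G k
  have hlen : ((l.map (induceFG (G.spow k))).map f0).length = (k + 1) ^ (Fintype.card G.V) := by
    simp only [hl, List.length_map, Finset.length_toList, Finset.card_univ,
      Fintype.card_fun, Fintype.card_fin]
  calc f0 G ^ k = f0 (G.spow k) := (f_spow h0 G k).symm
    _ ≤ ((l.map (induceFG (G.spow k))).map f0).sum := h0le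
    _ ≤ ((l.map (induceFG (G.spow k))).map f0).length • (f1 G ^ k) := hbound
    _ = ((k + 1 : ℕ) : ℝ) ^ (Fintype.card G.V) * f1 G ^ k := by
        rw [hlen, nsmul_eq_mul]
        push_cast
        ring

/-- Polynomial factors cannot beat exponential separation. -/
lemma le_of_poly_bound (a b : ℝ) (n : ℕ) (ha : 0 ≤ a) (hb : 0 ≤ b)
    (h : ∀ k : ℕ, a ^ k ≤ ((k + 1 : ℕ) : ℝ) ^ n * b ^ k) : a ≤ b := by
  by_contra hab
  push_neg at hab
  have ha' : 0 < a := lt_of_le_of_lt hb hab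
  rcases eq_or_lt_of_le hb with hb0 | hb0
  · have h1 := h 1
    rw [pow_one, pow_one, ← hb0, mul_zero] at h1
    exact absurd h1 (not_le.mpr ha')
  · set r := a / b with hr
    have hr1 : 1 < r := (one_lt_div hb0).mpr hab
    have hrk : ∀ k : ℕ, r ^ k ≤ ((k + 1 : ℕ) : ℝ) ^ n := by
      intro k
      rw [hr, div_pow, div_le_iff₀ (pow_pos hb0 k)]
      exact h k
    have T := tendsto_pow_const_div_const_pow_of_one_lt n hr1
    have T' : Tendsto (fun k : ℕ => ((k : ℝ) + 1) ^ n / r ^ (k + 1)) atTop (nhds 0) := by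
      apply (T.comp (tendsto_add_atTop_nat 1)).congr
      intro k
      simp only [Function.comp_apply]
      push_cast
      ring
    have hge : (0 : ℝ) ≥ 1 / r := by
      apply ge_of_tendsto T'
      filter_upwards with k
      have h1 : r ^ k ≤ ((k : ℝ) + 1) ^ n := by
        have := hrk k
        push_cast at this
        exact this
      have hrpos : (0 : ℝ) < r := lt_trans one_pos hr1
      rw [div_le_div_iff₀ hrpos (pow_pos hrpos (k + 1)), one_mul, pow_succ]
      nlinarith [mul_le_mul_of_nonneg_right h1 (le_of_lt hrpos), pow_pos hrpos k,
        pow_nonneg (le_of_lt hrpos) k]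
    have : (0 : ℝ) < 1 / r := div_pos one_pos (lt_trans one_pos hr1)
    linarith

lemma le_on_all (f0 f1 : FinGraph → ℝ) (h0 : f0 ∈ Delta) (h1 : f1 ∈ Delta)
    (hvt : ∀ A, IsVertexTransitive A → f0 A = f1 A) (G : FinGraph) :
    f0 G ≤ f1 G :=
  le_of_poly_bound (f0 G) (f1 G) (Fintype.card G.V) (h0.1 G) (h1.1 G)
    (key_ineq f0 f1 h0 h1 hvt G)

end FinGraph

/-- Distinct spectral points differ on some vertex-transitive graph. -/
theorem exists_vertexTransitive_separating (f0 f1 : FinGraph → ℝ)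
    (h0 : f0 ∈ Delta) (h1 : f1 ∈ Delta) (hne : f0 ≠ f1) :
    ∃ A : FinGraph, IsVertexTransitive A ∧ f0 A ≠ f1 A := by
  by_contra hcon
  push_neg at hcon
  apply hne
  funext G
  exact le_antisymm (le_on_all f0 f1 h0 h1 hcon G)
    (le_on_all f1 f0 h1 h0 (fun A h => (hcon A h).symm) G)
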